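/- Let 3 ≤ k ≤ n and n-k+3 ≤ j ≤ n. Then the word B = W_{n-k+2}^(k) k (the word W_{n-k+2}^(k) followed by the single digit k) is not a factor of W_j^(k). -/

import Mathlib

def kbon (k : ℕ) (n : ℕ) : ℕ :=
  if _h1 : n < k - 1 then 0
  else if _h2 : n = k - 1 then 1
  else ∑ i ∈ Finset.range k, kbon k (n - i - 1)
termination_by n
decreasing_by omega

/-- The k-bonacci morphism on words over ℕ. -/
def phiW (k : ℕ) (w : List ℕ) : List ℕ :=
  w.flatMap (fun a => if a % k = k - 1 then [a + 1] else [k * (a / k), a + 1])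

/-- The finite k-bonacci word over the infinite alphabet ℕ. -/
def W (k n : ℕ) : List ℕ := (phiW k)^[n] [0]

/-- Single block of the morphism. -/
def Bk (k a : ℕ) : List ℕ := if a % k = k - 1 then [a + 1] else [k * (a / k), a + 1]

lemma phiW_nil (k : ℕ) : phiW k [] = [] := rfl

lemma phiW_cons (k a : ℕ) (w : List ℕ) : phiW k (a :: w) = Bk k a ++ phiW k w := rfl

lemma phiW_append (k : ℕ) (u v : List ℕ) : phiW k (u ++ v) = phiW k u ++ phiW k v :=
  List.flatMap_append

lemma succ_mod_eq_zero {k a : ℕ} (hk : 1 ≤ k) (h : a % k = k - 1) : (a + 1) % k = 0 := by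
  have h2 := Nat.div_add_mod a k
  have h3 : a + 1 = k * (a / k) + k * 1 := by omega
  rw [h3, ← Nat.mul_add, Nat.mul_mod_right]

lemma succ_mod_ne_zero {k a : ℕ} (hk : 1 ≤ k) (h : a % k ≠ k - 1) : (a + 1) % k ≠ 0 := by
  have h1 : a % k < k := Nat.mod_lt a (by omega)
  have h2 := Nat.div_add_mod a k
  have h3 : a + 1 = k * (a / k) + (a % k + 1) := by omega
  rw [h3, Nat.mul_add_mod, Nat.mod_eq_of_lt (by omega)]
  omega

lemma Bk_cases (k a : ℕ) (hk : 1 ≤ k) :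
    (a % k = k - 1 ∧ Bk k a = [a + 1] ∧ (a + 1) % k = 0) ∨
    (a % k ≠ k - 1 ∧ Bk k a = [k * (a / k), a + 1] ∧ (k * (a / k)) % k = 0 ∧ (a + 1) % k ≠ 0) := by
  unfold Bk
  by_cases h : a % k = k - 1
  · exact Or.inl ⟨h, by simp [h], succ_mod_eq_zero hk h⟩
  · exact Or.inr ⟨h, by simp [h], Nat.mul_mod_right k _, succ_mod_ne_zero hk h⟩

lemma phiW_head (k : ℕ) (hk : 1 ≤ k) : ∀ v : List ℕ, v ≠ [] →
    ∃ h r, phiW k v = h :: r ∧ h % k = 0 := by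
  intro v hv
  cases v with
  | nil => exact absurd rfl hv
  | cons a w =>
    rw [phiW_cons]
    rcases Bk_cases k a hk with ⟨_, hB, hm⟩ | ⟨_, hB, hm, _⟩ <;> rw [hB]
    · exact ⟨a + 1, phiW k w, rfl, hm⟩
    · exact ⟨k * (a / k), (a + 1) :: phiW k w, rfl, hm⟩

/-- Every letter `c ≢ 0 (mod k)` in `phiW k w` is preceded by the first letter of its block. -/
lemma letter_pred (k : ℕ) (hk : 1 ≤ k) : ∀ (w s t : List ℕ) (c : ℕ),
    s ++ c :: t = phiW k w → c % k ≠ 0 →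
    ∃ s' e, s = s' ++ [k * (e / k)] ∧ e % k ≠ k - 1 ∧ c = e + 1 := by
  intro w
  induction w with
  | nil => intro s t c h _; simp [phiW_nil] at h
  | cons a w ih =>
    intro s t c h hc
    rw [phiW_cons] at h
    rcases Bk_cases k a hk with ⟨_, hB, hm⟩ | ⟨ha, hB, hm0, _⟩ <;> rw [hB] at h
    · cases s with
      | nil =>
        simp only [List.nil_append, List.cons_append, List.cons.injEq] at h
        exact absurd (h.1 ▸ hm) hc
      | cons x s' =>
        simp only [List.cons_append, List.nil_append, List.cons.injEq] at h
        obtain ⟨s'', e, hs, he1, he2⟩ := ih s' t c h.2 hc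
        exact ⟨x :: s'', e, by simp [hs], he1, he2⟩
    · match s with
      | [] =>
        simp only [List.nil_append, List.cons_append, List.cons.injEq] at h
        exact absurd (h.1 ▸ hm0) hc
      | [x] =>
        simp only [List.cons_append, List.nil_append, List.cons.injEq] at h
        exact ⟨[], a, by simp [h.1], ha, h.2.1⟩
      | x :: y :: s'' =>
        simp only [List.cons_append, List.nil_append, List.cons.injEq] at h
        obtain ⟨s₃, e, hs, he1, he2⟩ := ih s'' t c h.2.2 hc
        exact ⟨x :: y :: s₃, e, by simp [hs], he1, he2⟩

/-- In `phiW k w`, a letter following a `0` is between 1 and `k-1`. -/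
lemma zero_succ (k : ℕ) (hk : 1 ≤ k) : ∀ (w s t : List ℕ) (y : ℕ),
    s ++ 0 :: y :: t = phiW k w → y ≤ k - 1 := by
  intro w
  induction w with
  | nil => intro s t y h; simp [phiW_nil] at h
  | cons a w ih =>
    intro s t y h
    rw [phiW_cons] at h
    rcases Bk_cases k a hk with ⟨_, hB, _⟩ | ⟨ha, hB, _, _⟩ <;> rw [hB] at h
    · cases s with
      | nil => simp only [List.nil_append, List.cons_append, List.cons.injEq] at h; omega
      | cons x s' =>
        simp only [List.cons_append, List.nil_append, List.cons.injEq] at h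
        exact ih s' t y h.2
    · match s with
      | [] =>
        simp only [List.nil_append, List.cons_append, List.cons.injEq] at h
        obtain ⟨h1, h2, _⟩ := h
        have hdiv : a / k = 0 := by
          rcases Nat.mul_eq_zero.mp h1.symm with h | h
          · omega
          · exact h
        have h5 := Nat.div_add_mod a k
        rw [hdiv, Nat.mul_zero] at h5
        have h6 : a % k < k := Nat.mod_lt a (by omega)
        omega
      | [x] =>
        simp only [List.cons_append, List.nil_append, List.cons.injEq] at h
        obtain ⟨h1, h2, _⟩ := h
        omega
      | x :: x' :: s'' =>
        simp only [List.cons_append, List.nil_append, List.cons.injEq] at h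
        exact ih s'' t y h.2.2

/-- Synchronization, prefix version. -/
lemma sync_prefix (k : ℕ) (hk : 1 ≤ k) : ∀ (u w : List ℕ) (c : ℕ) (t : List ℕ),
    c % k = 0 → phiW k u ++ c :: t = phiW k w →
    ∃ b r t₂, w = u ++ b :: t₂ ∧ Bk k b = c :: r := by
  intro u
  induction u with
  | nil =>
    intro w c t hc h
    rw [phiW_nil, List.nil_append] at h
    cases w with
    | nil => simp [phiW_nil] at h
    | cons b w' =>
      rw [phiW_cons] at h
      rcases Bk_cases k b hk with ⟨_, hB, _⟩ | ⟨_, hB, _, _⟩ <;> rw [hB] at h <;>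
        simp only [List.cons_append, List.nil_append, List.cons.injEq] at h
      · exact ⟨b, [], w', by simp, by rw [hB, h.1]⟩
      · exact ⟨b, [b + 1], w', by simp, by rw [hB, h.1]⟩
  | cons u₀ u' ih =>
    intro w c t hc h
    cases w with
    | nil =>
      rw [phiW_nil] at h
      rcases Bk_cases k u₀ hk with ⟨_, hB, _⟩ | ⟨_, hB, _, _⟩ <;>
        rw [phiW_cons, hB] at h <;> simp at h
    | cons a w' =>
      rw [phiW_cons, phiW_cons] at h
      rcases Bk_cases k u₀ hk with ⟨_, hB1, hm1⟩ | ⟨_, hB1, _, hm1'⟩ <;>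
        rcases Bk_cases k a hk with ⟨_, hB2, _⟩ | ⟨_, hB2, _, hm2'⟩ <;>
        rw [hB1, hB2] at h <;>
        simp only [List.cons_append, List.nil_append, List.append_assoc,
          List.cons.injEq] at h
      · -- both singletons
        obtain ⟨h1, h2⟩ := h
        have hu0 : u₀ = a := by omega
        subst hu0
        obtain ⟨b, r, t₂, hw, hBb⟩ := ih w' c t hc h2
        exact ⟨b, r, t₂, by simp [hw], hBb⟩
      · -- u₀ singleton, a 2-block
        obtain ⟨h1, h2⟩ := h
        cases u' with
        | nil =>
          rw [phiW_nil, List.nil_append] at h2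
          simp only [List.cons.injEq] at h2
          exact absurd (h2.1 ▸ hc) hm2'
        | cons v₀ v' =>
          obtain ⟨hh, rr, hphi, hmod⟩ := phiW_head k hk (v₀ :: v') (by simp)
          rw [hphi] at h2
          simp only [List.cons_append, List.nil_append, List.cons.injEq] at h2
          exact absurd (h2.1 ▸ hmod) hm2'
      · -- u₀ 2-block, a singleton
        obtain ⟨h1, h2⟩ := h
        cases w' with
        | nil => rw [phiW_nil] at h2; simp at h2
        | cons v₀ v' =>
          obtain ⟨hh, rr, hphi, hmod⟩ := phiW_head k hk (v₀ :: v') (by simp)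
          rw [hphi] at h2
          simp only [List.cons.injEq] at h2
          exact absurd (h2.1 ▸ hmod) hm1'
      · -- both 2-blocks
        obtain ⟨h1, h2, h3⟩ := h
        have hu0 : u₀ = a := by omega
        subst hu0
        obtain ⟨b, r, t₂, hw, hBb⟩ := ih w' c t hc h3
        exact ⟨b, r, t₂, by simp [hw], hBb⟩

/-- Synchronization, infix version. -/
lemma sync_infix (k : ℕ) (hk : 1 ≤ k) : ∀ (w s u : List ℕ) (c : ℕ) (t : List ℕ),
    c % k = 0 → s ++ phiW k u ++ c :: t = phiW k w →
    ∃ s₂ b r t₂, w = s₂ ++ u ++ b :: t₂ ∧ Bk k b = c :: r := by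
  intro w
  induction w with
  | nil => intro s u c t _ h; rw [phiW_nil] at h; simp at h
  | cons a w' ih =>
    intro s u c t hc h
    rw [phiW_cons] at h
    cases s with
    | nil =>
      rw [List.nil_append] at h
      obtain ⟨b, r, t₂, hw, hBb⟩ := sync_prefix k hk u (a :: w') c t hc (by rw [phiW_cons, h])
      exact ⟨[], b, r, t₂, by simpa using hw, hBb⟩
    | cons x s' =>
      rcases Bk_cases k a hk with ⟨_, hB, _⟩ | ⟨_, hB, _, hm'⟩ <;> rw [hB] at h
      · simp only [List.cons_append, List.nil_append, List.cons.injEq] at h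
        obtain ⟨s₂, b, r, t₂, hw, hBb⟩ := ih s' u c t hc h.2
        exact ⟨a :: s₂, b, r, t₂, by simp [hw], hBb⟩
      · simp only [List.cons_append, List.nil_append, List.cons.injEq] at h
        obtain ⟨_, h2⟩ := h
        cases s' with
        | nil =>
          rw [List.nil_append] at h2
          cases u with
          | nil =>
            rw [phiW_nil, List.nil_append] at h2
            simp only [List.cons.injEq] at h2
            exact absurd (h2.1 ▸ hc) hm'
          | cons v₀ v' =>
            obtain ⟨hh, rr, hphi, hmod⟩ := phiW_head k hk (v₀ :: v') (by simp)
            rw [hphi] at h2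
            simp only [List.cons_append, List.nil_append, List.cons.injEq] at h2
            exact absurd (h2.1 ▸ hmod) hm'
        | cons y s'' =>
          simp only [List.cons_append, List.nil_append, List.cons.injEq] at h2
          obtain ⟨s₂, b, r, t₂, hw, hBb⟩ := ih s'' u c t hc h2.2
          exact ⟨a :: s₂, b, r, t₂, by simp [hw], hBb⟩

/-- Right-aligned synchronization (last block a 2-block), prefix version. -/
lemma sync2_prefix (k : ℕ) (hk : 1 ≤ k) : ∀ (u : List ℕ) (w : List ℕ) (x : ℕ) (t : List ℕ),
    x % k ≠ k - 1 → phiW k (u ++ [x]) ++ t = phiW k w →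
    ∃ t₂, w = (u ++ [x]) ++ t₂ := by
  intro u
  induction u with
  | nil =>
    intro w x t hx h
    rw [List.nil_append, phiW_cons, phiW_nil, List.append_nil] at h
    have hBx : Bk k x = [k * (x / k), x + 1] := by
      rcases Bk_cases k x hk with ⟨h1, _, _⟩ | ⟨_, h2, _, _⟩
      · exact absurd h1 hx
      · exact h2
    rw [hBx] at h
    cases w with
    | nil => rw [phiW_nil] at h; simp at h
    | cons a w' =>
      rw [phiW_cons] at h
      rcases Bk_cases k a hk with ⟨_, hB, _⟩ | ⟨_, hB, _, hm'⟩ <;> rw [hB] at h <;>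
        simp only [List.cons_append, List.nil_append, List.cons.injEq] at h
      · obtain ⟨_, h2⟩ := h
        cases w' with
        | nil => rw [phiW_nil] at h2; simp at h2
        | cons v₀ v' =>
          obtain ⟨hh, rr, hphi, hmod⟩ := phiW_head k hk (v₀ :: v') (by simp)
          rw [hphi] at h2
          simp only [List.cons_append, List.nil_append, List.cons.injEq] at h2
          have : (x + 1) % k ≠ 0 := succ_mod_ne_zero hk hx
          exact absurd (h2.1 ▸ hmod) this
      · exact ⟨w', by simp [show x = a by omega]⟩
  | cons u₀ u' ih =>
    intro w x t hx h
    rw [List.cons_append, phiW_cons] at h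
    cases w with
    | nil =>
      rw [phiW_nil] at h
      rcases Bk_cases k u₀ hk with ⟨_, hB, _⟩ | ⟨_, hB, _, _⟩ <;> rw [hB] at h <;> simp at h
    | cons a w' =>
      rw [phiW_cons] at h
      rcases Bk_cases k u₀ hk with ⟨_, hB1, _⟩ | ⟨_, hB1, _, hm1'⟩ <;>
        rcases Bk_cases k a hk with ⟨_, hB2, _⟩ | ⟨_, hB2, _, hm2'⟩ <;>
        rw [hB1, hB2] at h <;>
        simp only [List.cons_append, List.cons.injEq, List.append_assoc] at h
      · obtain ⟨h1, h2⟩ := h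
        obtain ⟨t₂, hw⟩ := ih w' x t hx (by simpa using h2)
        exact ⟨t₂, by simp [hw, show u₀ = a by omega]⟩
      · obtain ⟨_, h2⟩ := h
        obtain ⟨hh, rr, hphi, hmod⟩ := phiW_head k hk (u' ++ [x]) (by simp)
        rw [hphi] at h2
        simp only [List.cons_append, List.nil_append, List.cons.injEq] at h2
        exact absurd (h2.1 ▸ hmod) hm2'
      · obtain ⟨_, h2⟩ := h
        cases w' with
        | nil => rw [phiW_nil] at h2; simp at h2
        | cons v₀ v' =>
          obtain ⟨hh, rr, hphi, hmod⟩ := phiW_head k hk (v₀ :: v') (by simp)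
          rw [hphi] at h2
          simp only [List.cons_append, List.nil_append, List.cons.injEq] at h2
          exact absurd (h2.1 ▸ hmod) hm1'
      · obtain ⟨h1, h2, h3⟩ := h
        obtain ⟨t₂, hw⟩ := ih w' x t hx (by simpa using h3)
        exact ⟨t₂, by simp [hw, show u₀ = a by omega]⟩

/-- Right-aligned synchronization, infix version. -/
lemma sync2_infix (k : ℕ) (hk : 1 ≤ k) : ∀ (w s u : List ℕ) (x : ℕ) (t : List ℕ),
    x % k ≠ k - 1 → s ++ phiW k (u ++ [x]) ++ t = phiW k w →
    ∃ s₂ t₂, w = s₂ ++ (u ++ [x]) ++ t₂ := by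
  intro w
  induction w with
  | nil =>
    intro s u x t _ h
    rw [phiW_nil] at h
    rw [phiW_append, phiW_cons, phiW_nil, List.append_nil] at h
    rcases Bk_cases k x hk with ⟨_, hB, _⟩ | ⟨_, hB, _, _⟩ <;> rw [hB] at h <;> simp at h
  | cons a w' ih =>
    intro s u x t hx h
    rw [phiW_cons] at h
    cases s with
    | nil =>
      rw [List.nil_append] at h
      obtain ⟨t₂, hw⟩ := sync2_prefix k hk u (a :: w') x t hx (by rw [phiW_cons, h])
      exact ⟨[], t₂, by simpa using hw⟩
    | cons y s' =>
      rcases Bk_cases k a hk with ⟨_, hB, _⟩ | ⟨_, hB, _, hm'⟩ <;> rw [hB] at h <;>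
        simp only [List.cons_append, List.nil_append, List.cons.injEq] at h
      · obtain ⟨s₂, t₂, hw⟩ := ih s' u x t hx h.2
        exact ⟨a :: s₂, t₂, by simp [hw]⟩
      · obtain ⟨_, h2⟩ := h
        cases s' with
        | nil =>
          rw [List.nil_append] at h2
          obtain ⟨hh, rr, hphi, hmod⟩ := phiW_head k hk (u ++ [x]) (by simp)
          rw [hphi] at h2
          simp only [List.cons_append, List.nil_append, List.cons.injEq] at h2
          exact absurd (h2.1 ▸ hmod) hm'
        | cons y' s'' =>
          simp only [List.cons_append, List.nil_append, List.cons.injEq] at h2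
          obtain ⟨s₂, t₂, hw⟩ := ih s'' u x t hx h2.2
          exact ⟨a :: s₂, t₂, by simp [hw]⟩

lemma W_succ (k n : ℕ) : W k (n + 1) = phiW k (W k n) := by
  unfold W; rw [Function.iterate_succ_apply']

lemma W_last (k : ℕ) : ∀ n, ∃ p, W k n = p ++ [n] := by
  intro n
  induction n with
  | zero => exact ⟨[], rfl⟩
  | succ n ih =>
    obtain ⟨p, hp⟩ := ih
    rw [W_succ, hp, phiW_append, phiW_cons, phiW_nil, List.append_nil]
    unfold Bk
    by_cases h : n % k = k - 1
    · exact ⟨phiW k p, by simp [h]⟩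
    · exact ⟨phiW k p ++ [k * (n / k)], by simp [h]⟩

lemma W_letter_le (k : ℕ) : ∀ n a, a ∈ W k n → a ≤ n := by
  intro n
  induction n with
  | zero => intro a ha; unfold W at ha; simp at ha; omega
  | succ n ih =>
    intro a ha
    rw [W_succ] at ha
    unfold phiW at ha
    rw [List.mem_flatMap] at ha
    obtain ⟨e, he, hae⟩ := ha
    have hle := ih e he
    by_cases h : e % k = k - 1 <;> simp [h] at hae
    · omega
    · rcases hae with h1 | h1
      · have : k * (e / k) ≤ e := Nat.mul_div_le e k
        omega
      · omega


lemma W_eq (k : ℕ) {m n : ℕ} (h : m = n + 1) : W k m = phiW k (W k n) := by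
  rw [h, W_succ]

lemma Bk_zero (k : ℕ) (hk : 2 ≤ k) : Bk k 0 = [0, 1] := by
  unfold Bk
  rw [Nat.zero_mod, if_neg (by omega : ¬ (0:ℕ) = k - 1)]
  simp

lemma main_lemma (k : ℕ) (hk : 3 ≤ k) : ∀ μ (t : ℕ) (s₁ t₁ : List ℕ), 1 ≤ t → t ≤ k - 2 →
    s₁ ++ (W k μ ++ [k]) ++ t₁ ≠ W k (μ + t) := by
  intro μ
  induction μ using Nat.strong_induction_on with
  | _ μ ih =>
    intro t s₁ t₁ ht1 ht2 heq
    by_cases hsmall : μ + t < k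
    · have hkmem : k ∈ W k (μ + t) := by
        rw [← heq]; simp
      have := W_letter_le k (μ + t) k hkmem
      omega
    · push_neg at hsmall
      have hμ2 : 2 ≤ μ := by omega
      obtain ⟨a, rfl⟩ : ∃ a, μ = a + 2 := ⟨μ - 2, by omega⟩
      have ha2 : 2 ≤ a + 2 := by omega
      have heq' : s₁ ++ phiW k (W k (a + 1)) ++ k :: t₁ = phiW k (W k (a + 1 + t)) := by
        rw [← W_succ, ← W_eq k (show a + 2 + t = (a+1+t) + 1 by omega), ← heq]
        simp [List.append_assoc]
      obtain ⟨s₂, b, r, t₂, hw, hBb⟩ :=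
        sync_infix k (by omega) (W k (a+1+t)) s₁ (W k (a+1)) k t₁ (Nat.mod_self k) heq'
      by_cases hbk : b = k
      · subst hbk
        refine ih (a+1) (by omega) t s₂ t₂ ht1 ht2 ?_
        rw [hw]
        simp [List.append_assoc]
      · -- extract facts about b from hBb
        have hbfacts : b % k ≠ 0 ∧ (b = k - 1 ∨ (k + 1 ≤ b ∧ b ≤ 2*k - 2)) := by
          unfold Bk at hBb
          by_cases hbm : b % k = k - 1
          · rw [if_pos hbm] at hBb
            simp only [List.cons.injEq] at hBb
            refine ⟨by omega, Or.inl (by omega)⟩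
          · rw [if_neg hbm] at hBb
            simp only [List.cons.injEq] at hBb
            obtain ⟨hb1, _⟩ := hBb
            have hdiv : b / k = 1 := by
              have : k * (b / k) = k * 1 := by omega
              exact Nat.eq_of_mul_eq_mul_left (by omega) this
            have hdm := Nat.div_add_mod b k
            rw [hdiv] at hdm
            have hml : b % k < k := Nat.mod_lt _ (by omega)
            have hbnz : b % k ≠ 0 := fun h0 => hbk (by omega)
            exact ⟨hbnz, Or.inr ⟨by omega, by omega⟩⟩
        obtain ⟨hbnz, hbrange⟩ := hbfacts
        obtain ⟨p, hp⟩ := W_last k (a+1)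
        have hW1 : W k (a+1+t) = phiW k (W k (a+t)) := W_eq k (by omega)
        have hocc : (s₂ ++ p ++ [a+1]) ++ b :: t₂ = phiW k (W k (a+t)) := by
          rw [← hW1, hw, hp]
          simp [List.append_assoc]
        obtain ⟨s', e, hs', he1, he2⟩ :=
          letter_pred k (by omega) (W k (a+t)) (s₂ ++ p ++ [a+1]) t₂ b hocc hbnz
        have hlast : a + 1 = k * (e / k) := by
          have h1 := congrArg List.getLast? hs'
          rw [List.getLast?_concat, List.getLast?_concat] at h1
          exact Option.some.inj h1
        have hmodz : (a+1) % k = 0 := by rw [hlast]; exact Nat.mul_mod_right k _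
        have hedm := Nat.div_add_mod e k
        have heml : e % k < k := Nat.mod_lt _ (by omega)
        rcases hbrange with hb1 | ⟨hb2, hb3⟩
        · -- b = k - 1 : impossible
          have hlt : a + 1 < k := by omega
          rw [Nat.mod_eq_of_lt hlt] at hmodz
          omega
        · -- k+1 ≤ b ≤ 2k-2 : forces a+1 = k
          have hek : e % k ≤ k - 2 := by omega
          have hak : a + 1 = k := by
            obtain ⟨c, hc⟩ := Nat.dvd_of_mod_eq_zero hmodz
            have hub : a + 1 ≤ 2*k - 3 := by omega
            have hc2 : c < 2 := by
              by_contra hcc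
              have : k * 2 ≤ k * c := Nat.mul_le_mul_left k (by omega)
              omega
            interval_cases c <;> omega
          -- structure of W k (a+1) : it ends in [0, 1, k]
          obtain ⟨q, hq⟩ := W_last k (a-1)
          have hWa : W k a = phiW k q ++ [0, a] := by
            rw [W_eq k (show a = (a-1)+1 by omega), hq, phiW_append, phiW_cons,
              phiW_nil, List.append_nil]
            congr 1
            unfold Bk
            rw [Nat.mod_eq_of_lt (show a-1 < k by omega),
              if_neg (show ¬ a-1 = k-1 by omega),
              Nat.div_eq_of_lt (show a-1 < k by omega)]
            simp [show a-1+1 = a by omega]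
          have hWa1 : W k (a+1) = phiW k (phiW k q) ++ [0, 1, k] := by
            rw [W_succ k a, hWa, phiW_append]
            congr 1
            rw [phiW_cons, phiW_cons, phiW_nil, List.append_nil, Bk_zero k (by omega)]
            unfold Bk
            rw [Nat.mod_eq_of_lt (show a < k by omega), if_pos (show a = k-1 by omega)]
            simp [hak]
          -- e has Bk k e = [k, b]
          have hdive : e / k = 1 := by
            have : k * (e / k) = k * 1 := by omega
            exact Nat.eq_of_mul_eq_mul_left (by omega) this
          have hBe : Bk k e = [k, b] := by
            unfold Bk
            rw [if_neg he1, hdive]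
            simp [he2.symm, Nat.mul_one]
          have hform : s₂ ++ phiW k ((phiW k q ++ [0]) ++ [e]) ++ t₂ =
              phiW k (W k (a+t)) := by
            rw [phiW_append, phiW_append]
            simp only [phiW_cons, phiW_nil, List.append_nil]
            rw [Bk_zero k (by omega), hBe, ← hW1, hw, hWa1]
            simp [List.append_assoc]
          obtain ⟨s₃, t₃, hw3⟩ :=
            sync2_infix k (by omega) (W k (a+t)) s₂ (phiW k q ++ [0]) e t₂ he1 hform
          have hW3 : W k (a+t) = phiW k (W k (a+t-1)) := W_eq k (by omega)
          by_cases heK : e = k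
          · have hz := zero_succ k (by omega) (W k (a+t-1)) (s₃ ++ phiW k q) t₃ k (by
              rw [← hW3, hw3, heK]; simp [List.append_assoc])
            omega
          · have hemod : e % k ≠ 0 := by omega
            obtain ⟨s₄, e₂, hs₄, _, he₂2⟩ :=
              letter_pred k (by omega) (W k (a+t-1)) (s₃ ++ phiW k q ++ [0]) t₃ e (by
                rw [← hW3, hw3]; simp [List.append_assoc]) hemod
            have h0 : (0:ℕ) = k * (e₂ / k) := by
              have h1 := congrArg List.getLast? hs₄
              rw [List.getLast?_concat, List.getLast?_concat] at h1
              exact Option.some.inj h1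
            have h5 := Nat.div_add_mod e₂ k
            have h6 : e₂ % k < k := Nat.mod_lt _ (by omega)
            omega

theorem B_not_factor (k n j : ℕ) (hk : 3 ≤ k) (hkn : k ≤ n)
    (hj1 : n - k + 3 ≤ j) (hj2 : j ≤ n) :
    ¬ (W k (n - k + 2) ++ [k]) <:+: W k j := by
  intro h
  obtain ⟨s, t', hst⟩ := h
  refine main_lemma k hk (n - k + 2) (j - (n - k + 2)) s t' (by omega) (by omega) ?_
  rw [show (n - k + 2) + (j - (n - k + 2)) = j by omega]
  exact hst
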